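/- Let (E,w) be a row-finite weighted graph with at least one vertex and let q = x₁…x_n be a quasicycle such that qq* is a nod-path and q* is a cyclic rotation of q (i.e. q* = x_{k+1}…x_n x₁…x_k for some 1≤k≤n). Then q = q*. -/

import Mathlib

/-!
Definitions for weighted graphs and weighted Leavitt path algebras,
following Hazrat–Preusser.  All weighted graphs are assumed row-finite
with at least one vertex (this is built into the structure).
-/

/-- A (row-finite, nonempty) weighted graph `(E,w)`. -/
structure WeightedGraph : Type 1 where
  V : Type
  E : Type
  s : E → V
  r : E → V
  w : E → ℕ
  w_pos : ∀ e, 1 ≤ w e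
  rowFinite : ∀ v : V, {e : E | s e = v}.Finite
  vNonempty : Nonempty V

namespace WeightedGraph

section GraphDefs

variable (G : WeightedGraph)

/-- `(E,w)` is a finite weighted graph. -/
def IsFinite : Prop := Finite G.V ∧ Finite G.E

/-- `(E,w)` is unweighted iff all edges have weight 1. -/
def IsUnweighted : Prop := ∀ e : G.E, G.w e = 1

/-- a sink is a vertex emitting no edges. -/
def IsSink (v : G.V) : Prop := ∀ e : G.E, G.s e ≠ v

/-- `w(v) = max { w(e) ∣ e ∈ s⁻¹(v) }` (with `max ∅ = 0`). -/
noncomputable def vw (v : G.V) : ℕ := sSup (G.w '' {e : G.E | G.s e = v})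

/-- Edges of the associated directed graph `Ê`: pairs `(e,i)` with `1 ≤ i ≤ w(e)`,
representing the edge `e_i`. -/
abbrev HatE : Type := {p : G.E × ℕ // 1 ≤ p.2 ∧ p.2 ≤ G.w p.1}

def hatS (x : G.HatE) : G.V := G.s x.1.1

def hatR (x : G.HatE) : G.V := G.r x.1.1

/-- Letters of the double graph `Ê_d`: `Sum.inl` is a real edge `e_i`,
`Sum.inr` is a ghost edge `e_i^*`. -/
abbrev DL : Type := G.HatE ⊕ G.HatE

/-- source of a letter of `Ê_d`. -/
def dS : G.DL → G.V
  | Sum.inl x => G.hatS x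
  | Sum.inr x => G.hatR x

/-- range of a letter of `Ê_d`. -/
def dR : G.DL → G.V
  | Sum.inl x => G.hatR x
  | Sum.inr x => G.hatS x

def dFlip : G.DL → G.DL
  | Sum.inl x => Sum.inr x
  | Sum.inr x => Sum.inl x

/-- the star `p ↦ p^*` of a d-word. -/
def dStar (l : List G.DL) : List G.DL := (l.map G.dFlip).reverse

/-- standard degree of a letter: `deg e_i = ε_i`, `deg e_i^* = -ε_i`
(as finitely supported functions `ℕ →₀ ℤ`). -/
noncomputable def dDeg : G.DL → (ℕ →₀ ℤ)
  | Sum.inl x => Finsupp.single x.1.2 1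
  | Sum.inr x => -(Finsupp.single x.1.2 1)

/-- homogeneous degree of a d-word. -/
noncomputable def dWordDeg (l : List G.DL) : ℕ →₀ ℤ := (l.map G.dDeg).sum

/-- `u ≥ v`: there is a path in `E` from `u` to `v`. -/
def Reaches : G.V → G.V → Prop :=
  Relation.ReflTransGen (fun u v => ∃ e : G.E, G.s e = u ∧ G.r e = v)

/-- a nontrivial path in `E`, given by its (nonempty) list of edges. -/
def IsPath (l : List G.E) : Prop :=
  l ≠ [] ∧ l.Chain' (fun a b => G.r a = G.s b)

/-- source of a nontrivial path. -/
def pSrc? (l : List G.E) : Option G.V := l.head?.map G.s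

/-- range of a nontrivial path. -/
def pRng? (l : List G.E) : Option G.V := l.getLast?.map G.r

/-- a cycle in `E`: a closed nontrivial path with pairwise distinct sources. -/
def IsCycle (l : List G.E) : Prop :=
  G.IsPath l ∧ G.pRng? l = G.pSrc? l ∧ (l.map G.s).Nodup

def Acyclic : Prop := ∀ l : List G.E, ¬ G.IsCycle l

/-- the cycle `l` has an exit. -/
def CycleHasExit (l : List G.E) : Prop :=
  ∃ x ∈ l, ∃ e : G.E, G.s e = G.s x ∧ e ≠ x

def NoCycleHasExit : Prop := ∀ l : List G.E, G.IsCycle l → ¬ G.CycleHasExit l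

/-- `v ∈ T(r(E¹_w))`: some weighted edge's range reaches `v`. -/
def InTRw (v : G.V) : Prop := ∃ g : G.E, 1 < G.w g ∧ G.Reaches (G.r g) v

/-- two edges are in line. -/
def InLine (e f : G.E) : Prop :=
  e = f ∨ G.Reaches (G.r e) (G.s f) ∨ G.Reaches (G.r f) (G.s e)

/-- Condition (i): no vertex emits two distinct weighted edges. -/
def Cond1 : Prop := ∀ e f : G.E, 1 < G.w e → 1 < G.w f → G.s e = G.s f → e = f

/-- Condition (ii): no vertex of `T(r(E¹_w))` emits two distinct edges. -/
def Cond2 : Prop :=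
  ∀ v : G.V, G.InTRw v → ∀ e f : G.E, G.s e = v → G.s f = v → e = f

/-- Condition (iii): weighted edges not in line have disjoint trees of their ranges. -/
def Cond3 : Prop :=
  ∀ e f : G.E, 1 < G.w e → 1 < G.w f → ¬ G.InLine e f →
    ∀ v : G.V, G.Reaches (G.r e) v → ¬ G.Reaches (G.r f) v

/-- Condition (iv): no cycle is based at a vertex of `T(r(E¹_w))`. -/
def Cond4 : Prop :=
  ∀ l : List G.E, G.IsCycle l → ∀ v : G.V, G.pSrc? l = some v → ¬ G.InTRw v

/-- Condition (v): there is no "weighted/unweighted zig-zag cycle" of paths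
`p₁,…,p_n,q₁,…,q_n` (indices cyclic, 0-based). -/
def Cond5 : Prop :=
  ¬ ∃ (n : ℕ) (hn : 0 < n) (p q : Fin n → List G.E),
      (∀ i, G.IsPath (p i)) ∧ (∀ i, G.IsPath (q i)) ∧
      (∀ i, G.pRng? (p i) = G.pRng? (q i)) ∧
      (∀ i : Fin n, G.pSrc? (p ⟨(i.1 + 1) % n, Nat.mod_lt _ hn⟩) = G.pSrc? (q i)) ∧
      (∀ i, ∃ a, (p i).head? = some a ∧ 1 < G.w a) ∧
      (∀ i, ∃ a, (q i).head? = some a ∧ G.w a = 1) ∧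
      (∀ i, ∃ a b, (p i).getLast? = some a ∧ (q i).getLast? = some b ∧ a ≠ b)

/-- the weighted part of `(E,w)` is weakly well-behaved. -/
def WeaklyWellBehaved : Prop := G.Cond1 ∧ G.Cond2 ∧ G.Cond3 ∧ G.Cond4

/-- the weighted part of `(E,w)` is well-behaved. -/
def WellBehaved : Prop := G.WeaklyWellBehaved ∧ G.Cond5

/-- a weighted edge is of type A if it is the only edge emitted by its source. -/
def TypeA (e : G.E) : Prop := ∀ f : G.E, G.s f = G.s e → f = e

/-- `sp` is a choice of special edges: for every non-sink `v`, `sp v ∈ s⁻¹(v)`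
and `w (sp v) = w(v)`. -/
def HasSpecial (sp : G.V → G.E) : Prop :=
  ∀ v : G.V, (∃ e : G.E, G.s e = v) → G.s (sp v) = v ∧ G.w (sp v) = G.vw v

/-- forbidden two-letter words, relative to a choice `sp` of special edges:
`e^v_i (e^v_j)^*` and `e_1^* f_1` (for `e,f` with the same source). -/
def Forbidden (sp : G.V → G.E) : G.DL → G.DL → Prop
  | Sum.inl a, Sum.inr b => a.1.1 = b.1.1 ∧ a.1.1 = sp (G.s a.1.1)
  | Sum.inr a, Sum.inl b => a.1.2 = 1 ∧ b.1.2 = 1 ∧ G.s a.1.1 = G.s b.1.1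
  | _, _ => False

/-- a d-word is a path in the double graph `Ê_d`. -/
def IsDWord (l : List G.DL) : Prop := l.Chain' (fun x y => G.dR x = G.dS y)

/-- source of a nontrivial d-path. -/
def dSrc? (l : List G.DL) : Option G.V := l.head?.map G.dS

/-- range of a nontrivial d-path. -/
def dRng? (l : List G.DL) : Option G.V := l.getLast?.map G.dR

/-- a nod-path: a d-path none of whose subwords is forbidden. -/
def IsNod (sp : G.V → G.E) (l : List G.DL) : Prop :=
  G.IsDWord l ∧ l.Chain' (fun x y => ¬ G.Forbidden sp x y)

/-- a (nontrivial) nod²-path: a nod-path `p` such that `p²` is a nod-path. -/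
def IsNod2 (sp : G.V → G.E) (l : List G.DL) : Prop :=
  l ≠ [] ∧ G.IsNod sp (l ++ l)

/-- a quasicycle: a nod²-path `p` such that no subword of `p²` of length `< |p|`
is a nod²-path. -/
def IsQuasicycle (sp : G.V → G.E) (l : List G.DL) : Prop :=
  G.IsNod2 sp l ∧
    ∀ m : List G.DL, m <:+: (l ++ l) → m.length < l.length → ¬ G.IsNod2 sp m

/-- a lenod-path: a nod-path `p` such that `o ++ p` is a nod-path for every
nontrivial nod-path `o` with `r(o) = s(p)`. -/
def IsLenod (sp : G.V → G.E) (l : List G.DL) : Prop :=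
  G.IsNod sp l ∧ ∀ o : List G.DL, o ≠ [] → G.IsNod sp o →
    G.dRng? o = G.dSrc? l → G.IsNod sp (o ++ l)

/-- a nontrivial path in `Ê`, as a nonempty list of edges of `Ê`. -/
def IsHatPath (l : List G.HatE) : Prop :=
  l ≠ [] ∧ l.Chain' (fun a b => G.hatR a = G.hatS b)

/-- `max { w(f) ∣ f ∈ s⁻¹(s(e)), f ≠ e }` (with `max ∅ = 0`). -/
noncomputable def maxOther (e : G.E) : ℕ :=
  sSup (G.w '' {f : G.E | G.s f = G.s e ∧ f ≠ e})

/-- a super-special path in `Ê`. -/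
def IsSuperSpecial (l : List G.HatE) : Prop :=
  G.IsHatPath l ∧ ∀ x ∈ l, G.maxOther x.1.1 < x.1.2

/-- an unweighted path in `Ê`. -/
def IsUnweightedPath (l : List G.HatE) : Prop :=
  G.IsHatPath l ∧ ∀ x ∈ l, G.w x.1.1 = 1

def hatSrc? (l : List G.HatE) : Option G.V := l.head?.map G.hatS

def hatRng? (l : List G.HatE) : Option G.V := l.getLast?.map G.hatR

/-- a closed nontrivial path in `Ê`. -/
def IsHatClosed (l : List G.HatE) : Prop :=
  G.IsHatPath l ∧ G.hatRng? l = G.hatSrc? l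

/-- a cycle in `Ê`. -/
def IsHatCycle (l : List G.HatE) : Prop :=
  G.IsHatPath l ∧ G.hatRng? l = G.hatSrc? l ∧ (l.map G.hatS).Nodup

/-- embedding of paths of `Ê` as d-words consisting of real edges. -/
def embR (l : List G.HatE) : List G.DL := l.map Sum.inl

end GraphDefs

section AlgebraDefs

variable (G : WeightedGraph) (K : Type) [Field K]

/-- generator of the free algebra corresponding to a vertex. -/
noncomputable def gV (v : G.V) : FreeAlgebra K (G.V ⊕ G.DL) :=
  FreeAlgebra.ι K (Sum.inl v)

/-- generator of the free algebra corresponding to a (real or ghost) edge of `Ê_d`. -/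
noncomputable def gD (x : G.DL) : FreeAlgebra K (G.V ⊕ G.DL) :=
  FreeAlgebra.ι K (Sum.inr x)

/-- `e_i`, interpreted as `0` if `i > w(e)` or `i = 0`. -/
noncomputable def gReal (e : G.E) (i : ℕ) : FreeAlgebra K (G.V ⊕ G.DL) :=
  if h : 1 ≤ i ∧ i ≤ G.w e then G.gD K (Sum.inl ⟨(e, i), h⟩) else 0

/-- `e_i^*`, interpreted as `0` if `i > w(e)` or `i = 0`. -/
noncomputable def gGhost (e : G.E) (i : ℕ) : FreeAlgebra K (G.V ⊕ G.DL) :=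
  if h : 1 ≤ i ∧ i ≤ G.w e then G.gD K (Sum.inr ⟨(e, i), h⟩) else 0

end AlgebraDefs

/-- The defining relations of the weighted Leavitt path algebra `L_K(E,w)`:
the path algebra relations, the two families of Leavitt relations, and
(for a graph with finitely many vertices) `∑ v = 1`. -/
inductive LRel (G : WeightedGraph) (K : Type) [Field K] :
    FreeAlgebra K (G.V ⊕ G.DL) → FreeAlgebra K (G.V ⊕ G.DL) → Prop
  | vertex_eq (v : G.V) : LRel G K (G.gV K v * G.gV K v) (G.gV K v)
  | vertex_ne (v v' : G.V) (h : v ≠ v') : LRel G K (G.gV K v * G.gV K v') 0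
  | src (x : G.DL) : LRel G K (G.gV K (G.dS x) * G.gD K x) (G.gD K x)
  | rng (x : G.DL) : LRel G K (G.gD K x * G.gV K (G.dR x)) (G.gD K x)
  | inner_eq (v : G.V) (i : ℕ) (h1 : 1 ≤ i) (h2 : i ≤ G.vw v) :
      LRel G K (∑ᶠ e ∈ {e : G.E | G.s e = v}, G.gReal K e i * G.gGhost K e i)
        (G.gV K v)
  | inner_ne (v : G.V) (i j : ℕ) (h1 : 1 ≤ i) (h2 : i ≤ G.vw v)
      (h3 : 1 ≤ j) (h4 : j ≤ G.vw v) (hij : i ≠ j) :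
      LRel G K (∑ᶠ e ∈ {e : G.E | G.s e = v}, G.gReal K e i * G.gGhost K e j) 0
  | outer_eq (e : G.E) :
      LRel G K (∑ i ∈ Finset.Icc 1 (G.vw (G.s e)), G.gGhost K e i * G.gReal K e i)
        (G.gV K (G.r e))
  | outer_ne (e f : G.E) (h : G.s e = G.s f) (hef : e ≠ f) :
      LRel G K (∑ i ∈ Finset.Icc 1 (G.vw (G.s e)), G.gGhost K e i * G.gReal K f i) 0
  | unit (h : Finite G.V) : LRel G K (∑ᶠ v : G.V, G.gV K v) 1

/-- The weighted Leavitt path algebra `L_K(E,w)`. -/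
abbrev LWPA (G : WeightedGraph) (K : Type) [Field K] : Type :=
  RingQuot (LRel G K)

/-- image of a vertex in `L_K(E,w)`. -/
noncomputable def vx (G : WeightedGraph) (K : Type) [Field K] (v : G.V) : LWPA G K :=
  RingQuot.mkAlgHom K (LRel G K) (G.gV K v)

/-- image of a letter of `Ê_d` in `L_K(E,w)`. -/
noncomputable def dlx (G : WeightedGraph) (K : Type) [Field K] (x : G.DL) : LWPA G K :=
  RingQuot.mkAlgHom K (LRel G K) (G.gD K x)

/-- image of a d-word in `L_K(E,w)` (product of its letters). -/
noncomputable def wordProd (G : WeightedGraph) (K : Type) [Field K]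
    (l : List G.DL) : LWPA G K :=
  (l.map (G.dlx K)).prod

/-- image in `L_K(E,w)` of an arbitrary word in vertices and edges of `Ê_d`. -/
noncomputable def genProd (G : WeightedGraph) (K : Type) [Field K]
    (l : List (G.V ⊕ G.DL)) : LWPA G K :=
  (l.map (fun t => RingQuot.mkAlgHom K (LRel G K) (FreeAlgebra.ι K t))).prod

/-- degree of a generator (vertices have degree `0`). -/
noncomputable def genDeg (G : WeightedGraph) : G.V ⊕ G.DL → (ℕ →₀ ℤ)
  | Sum.inl _ => 0
  | Sum.inr x => G.dDeg x

/-- degree of a word in the generators. -/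
noncomputable def genWordDeg (G : WeightedGraph) (l : List (G.V ⊕ G.DL)) : ℕ →₀ ℤ :=
  (l.map G.genDeg).sum

/-- the homogeneous component of degree `g` of `L_K(E,w)` with respect to the
standard grading: the span of the images of all words of degree `g`. -/
noncomputable def component (G : WeightedGraph) (K : Type) [Field K] (g : ℕ →₀ ℤ) :
    Submodule K (LWPA G K) :=
  Submodule.span K
    {a : LWPA G K | ∃ l : List (G.V ⊕ G.DL), G.genWordDeg l = g ∧ a = G.genProd K l}

/-- `L_K(E,w)` is locally finite with respect to its standard grading. -/
def LocallyFinite (G : WeightedGraph) (K : Type) [Field K] : Prop :=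
  ∀ g : ℕ →₀ ℤ, FiniteDimensional K ↥(G.component K g)

end WeightedGraph

/-- The Gelfand–Kirillov dimension of a `K`-algebra `A`: the supremum over all
finite-dimensional subspaces `W ≤ A` of
`limsup_n log(dim_K (K + W + W² + ⋯ + Wⁿ)) / log n`. -/
noncomputable def gkDim (K : Type) [Field K] (A : Type) [Ring A] [Algebra K A] : EReal :=
  ⨆ (W : Submodule K A) (_ : FiniteDimensional K ↥W),
    Filter.limsup
      (fun n : ℕ =>
        ((Real.log (Module.finrank K ↥(∑ i ∈ Finset.range (n + 1), W ^ i) : ℝ) /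
            Real.log (n : ℝ) : ℝ) : EReal))
      Filter.atTop

private lemma chain'_double {α : Type*} {R : α → α → Prop} {q : List α} {k : ℕ}
    (hq : List.Chain' R q)
    (hj : List.Chain' R (q ++ (q.drop k ++ q.take k)))
    (hk : k < q.length) :
    List.Chain' R (q.drop k ++ q.drop k) := by
  have hpne : q.drop k ≠ [] := by
    intro h
    have := congrArg List.length h
    simp at this; omega
  have hqne : q ≠ [] := by
    intro h; subst h; simp at hk
  have hchain : List.Chain' R (q.drop k) := hq.drop k
  unfold List.Chain' at hj
  rw [List.isChain_append] at hj
  obtain ⟨-, -, hjunct⟩ := hj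
  unfold List.Chain'
  rw [List.isChain_append]
  refine ⟨hchain, hchain, ?_⟩
  intro x hx y hy
  apply hjunct x
  · have : (q.take k ++ q.drop k).getLast? = (q.drop k).getLast? :=
      List.getLast?_append_of_ne_nil _ hpne
    rw [List.take_append_drop] at this
    rw [this]; exact hx
  · rw [List.head?_append_of_ne_nil _ hpne]; exact hy

/-- **Lemma (Statement 12).** Let `q` be a quasicycle such that `qq^*` is a
nod-path and `q^*` is a cyclic rotation of `q`.  Then `q = q^*`. -/
theorem quasicycle_star_rotation (G : WeightedGraph)
    (sp : G.V → G.E) (hsp : G.HasSpecial sp)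
    (q : List G.DL) (hq : G.IsQuasicycle sp q)
    (hnod : G.IsNod sp (q ++ G.dStar q))
    (hrot : ∃ k, 1 ≤ k ∧ k ≤ q.length ∧ G.dStar q = q.drop k ++ q.take k) :
    G.dStar q = q := by
  obtain ⟨k, hk1, hk2, hstar⟩ := hrot
  rcases eq_or_lt_of_le hk2 with heq | hlt
  · rw [hstar, heq, List.drop_length, List.take_length, List.nil_append]
  · exfalso
    obtain ⟨⟨hne, hdw2, hnf2⟩, hmin⟩ := hq
    obtain ⟨hdw, hnf⟩ := hnod
    rw [hstar] at hdw hnf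
    have hpne : q.drop k ≠ [] := by
      intro h
      have := congrArg List.length h
      simp at this; omega
    have hplen : (q.drop k).length < q.length := by
      simp; omega
    have hinf : q.drop k <:+: q ++ q :=
      (List.drop_suffix k q).isInfix.trans (q.prefix_append q).isInfix
    apply hmin (q.drop k) hinf hplen
    refine ⟨hpne, ?_, ?_⟩
    · exact chain'_double ((List.isChain_append.mp hdw2).1) hdw hlt
    · exact chain'_double ((List.isChain_append.mp hnf2).1) hnf hlt
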